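/- For all nonnegative integers N and M, s_p(N)·s_p(M) = s_p(N·M) if and only if the base-p multiplication of N and M is carry-free, i.e., for every k ≥ 0 the convolution sum over i+j=k of the i-th base-p digit of N times the j-th base-p digit of M is at most p-1. -/

import Mathlib

/-- Sum of the base-`p` digits of `n`. -/
def digitSum (p n : ℕ) : ℕ := (Nat.digits p n).sum

lemma dsum_zero (p : ℕ) : digitSum p 0 = 0 := by simp [digitSum]

lemma dsum_eq {p : ℕ} (hp : 1 < p) {n : ℕ} (hn : 0 < n) :
    digitSum p n = n % p + digitSum p (n / p) := by
  unfold digitSum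
  rw [Nat.digits_def' hp hn, List.sum_cons]

lemma dsum_one {p : ℕ} (hp : 1 < p) : digitSum p 1 = 1 := by
  rw [dsum_eq hp one_pos, Nat.mod_eq_of_lt hp, Nat.div_eq_of_lt hp, dsum_zero]

lemma dsum_lt {p : ℕ} (hp : 1 < p) {c : ℕ} (hc : p ≤ c) : digitSum p c < c := by
  have h0 : 0 < c := lt_of_lt_of_le (by omega) hc
  rw [dsum_eq hp h0]
  have h1 : digitSum p (c / p) ≤ c / p := Nat.digit_sum_le p (c / p)
  have h2 : 1 ≤ c / p := (Nat.one_le_div_iff (by omega)).2 hc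
  have h3 := Nat.div_add_mod c p
  have h4 : 2 * (c / p) ≤ p * (c / p) := Nat.mul_le_mul_right _ hp
  omega

lemma dsum_add_mul {p : ℕ} (hp : 1 < p) {c : ℕ} (hc : c < p) (m : ℕ) :
    digitSum p (c + p * m) = c + digitSum p m := by
  rcases Nat.eq_zero_or_pos (c + p * m) with h | h
  · have : c = 0 ∧ m = 0 := by constructor <;> nlinarith
    simp [this.1, this.2, dsum_zero]
  · rw [dsum_eq hp h, Nat.add_mul_mod_self_left, Nat.mod_eq_of_lt hc,
      Nat.add_mul_div_left _ _ (by omega), Nat.div_eq_of_lt hc, zero_add]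

lemma dsum_subadd {p : ℕ} (hp : 1 < p) (a b : ℕ) :
    digitSum p (a + b) ≤ digitSum p a + digitSum p b := by
  have H : ∀ n a b, a + b ≤ n → digitSum p (a + b) ≤ digitSum p a + digitSum p b := by
    intro n
    induction n using Nat.strong_induction_on with
    | _ n ih =>
      intro a b hab
      rcases Nat.eq_zero_or_pos a with ha | ha
      · simp [ha]
      rcases Nat.eq_zero_or_pos b with hb | hb
      · simp [hb]
      have hp0 : 0 < p := by omega
      have hda := Nat.div_add_mod a p
      have hdb := Nat.div_add_mod b p
      rw [dsum_eq hp ha, dsum_eq hp hb, dsum_eq hp (by omega)]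
      rcases lt_or_ge (a % p + b % p) p with hcase | hcase
      · have hmod : (a + b) % p = a % p + b % p := by
          conv_lhs => rw [← hda, ← hdb]
          rw [show p * (a / p) + a % p + (p * (b / p) + b % p)
              = a % p + b % p + p * (a / p + b / p) by ring,
            Nat.add_mul_mod_self_left, Nat.mod_eq_of_lt hcase]
        have hdiv : (a + b) / p = a / p + b / p := by
          conv_lhs => rw [← hda, ← hdb]
          rw [show p * (a / p) + a % p + (p * (b / p) + b % p)
              = a % p + b % p + p * (a / p + b / p) by ring,
            Nat.add_mul_div_left _ _ hp0, Nat.div_eq_of_lt hcase, zero_add]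
        have := ih (a / p + b / p) (by
          have := Nat.div_le_self a p
          have h2a : 2 * (a / p) ≤ p * (a / p) := Nat.mul_le_mul_right _ hp
          have h2b : 2 * (b / p) ≤ p * (b / p) := Nat.mul_le_mul_right _ hp
          omega) (a / p) (b / p) le_rfl
        rw [hmod, hdiv]; omega
      · have hmod : (a + b) % p = a % p + b % p - p := by
          conv_lhs => rw [← hda, ← hdb]
          rw [show p * (a / p) + a % p + (p * (b / p) + b % p)
              = (a % p + b % p - p) + p * (a / p + b / p + 1) by
                have := Nat.mod_lt a hp0; have := Nat.mod_lt b hp0; ring_nf; omega,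
            Nat.add_mul_mod_self_left, Nat.mod_eq_of_lt (by
              have := Nat.mod_lt a hp0; have := Nat.mod_lt b hp0; omega)]
        have hdiv : (a + b) / p = a / p + b / p + 1 := by
          conv_lhs => rw [← hda, ← hdb]
          rw [show p * (a / p) + a % p + (p * (b / p) + b % p)
              = (a % p + b % p - p) + p * (a / p + b / p + 1) by
                have := Nat.mod_lt a hp0; have := Nat.mod_lt b hp0; ring_nf; omega,
            Nat.add_mul_div_left _ _ hp0, Nat.div_eq_of_lt (by
              have := Nat.mod_lt a hp0; have := Nat.mod_lt b hp0; omega), zero_add]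
        have hlt : a / p + b / p + 1 < n := by
          have h2a : 2 * (a / p) ≤ p * (a / p) := Nat.mul_le_mul_right _ hp
          have h2b : 2 * (b / p) ≤ p * (b / p) := Nat.mul_le_mul_right _ hp
          have := Nat.mod_lt a hp0; have := Nat.mod_lt b hp0
          omega
        have h1 : digitSum p (a / p + b / p + 1)
            ≤ digitSum p (a / p + b / p) + digitSum p 1 :=
          ih _ hlt (a / p + b / p) 1 le_rfl
        have h2 : digitSum p (a / p + b / p)
            ≤ digitSum p (a / p) + digitSum p (b / p) :=
          ih _ (by omega) (a / p) (b / p) le_rfl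
        rw [hmod, hdiv]
        rw [dsum_one hp] at h1
        have := Nat.mod_lt a hp0; have := Nat.mod_lt b hp0
        omega
  exact H (a + b) a b le_rfl

lemma dsum_mul_base {p : ℕ} (hp : 1 < p) (m : ℕ) : digitSum p (p * m) = digitSum p m := by
  simpa using dsum_add_mul hp (show 0 < p by omega) m

lemma dsum_sum_le {p : ℕ} (hp : 1 < p) (L : ℕ) (c : ℕ → ℕ) :
    digitSum p (∑ k ∈ Finset.range L, c k * p ^ k) ≤ ∑ k ∈ Finset.range L, digitSum p (c k) := by
  induction L generalizing c with
  | zero => simp [dsum_zero]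
  | succ L ih =>
    rw [Finset.sum_range_succ' (fun k => c k * p ^ k),
      show ∑ k ∈ Finset.range L, c (k + 1) * p ^ (k + 1)
        = p * ∑ k ∈ Finset.range L, c (k + 1) * p ^ k by
          rw [Finset.mul_sum]; apply Finset.sum_congr rfl; intros; ring]
    calc digitSum p (p * ∑ k ∈ Finset.range L, c (k + 1) * p ^ k + c 0 * p ^ 0)
        ≤ digitSum p (p * ∑ k ∈ Finset.range L, c (k + 1) * p ^ k) + digitSum p (c 0 * p ^ 0) :=
          dsum_subadd hp _ _
      _ ≤ ∑ k ∈ Finset.range L, digitSum p (c (k + 1)) + digitSum p (c 0) := by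
          rw [dsum_mul_base hp, pow_zero, mul_one]
          exact Nat.add_le_add_right (ih _) _
      _ = ∑ k ∈ Finset.range (L + 1), digitSum p (c k) := by
          rw [Finset.sum_range_succ' (fun k => digitSum p (c k))]

lemma dsum_sum_eq {p : ℕ} (hp : 1 < p) (L : ℕ) (c : ℕ → ℕ) (hc : ∀ k, c k < p) :
    digitSum p (∑ k ∈ Finset.range L, c k * p ^ k) = ∑ k ∈ Finset.range L, c k := by
  induction L generalizing c with
  | zero => simp [dsum_zero]
  | succ L ih =>
    rw [Finset.sum_range_succ' (fun k => c k * p ^ k),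
      show ∑ k ∈ Finset.range L, c (k + 1) * p ^ (k + 1)
        = p * ∑ k ∈ Finset.range L, c (k + 1) * p ^ k by
          rw [Finset.mul_sum]; apply Finset.sum_congr rfl; intros; ring,
      pow_zero, mul_one, add_comm, dsum_add_mul hp (hc 0), ih (fun k => c (k + 1)) (fun k => hc _),
      Finset.sum_range_succ' c]
    omega

lemma dsum_range {p : ℕ} (hp : 1 < p) (L N : ℕ) (hN : N < p ^ L) :
    digitSum p N = ∑ i ∈ Finset.range L, N / p ^ i % p := by
  induction L generalizing N with
  | zero => simp at hN; simp [hN, dsum_zero]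
  | succ L ih =>
    rcases Nat.eq_zero_or_pos N with h | h
    · simp [h, dsum_zero]
    rw [dsum_eq hp h, Finset.sum_range_succ' (fun i => N / p ^ i % p)]
    have hdiv : N / p < p ^ L := by
      rw [Nat.div_lt_iff_lt_mul (by omega)]
      calc N < p ^ (L + 1) := hN
        _ = p ^ L * p := by ring
    rw [ih (N / p) hdiv]
    simp only [pow_zero, Nat.div_one, pow_succ]
    rw [add_comm]
    congr 1
    apply Finset.sum_congr rfl
    intro i _
    rw [Nat.div_div_eq_div_mul, mul_comm (p ^ i) p, ← Nat.div_div_eq_div_mul]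

lemma sum_digit_mul_pow {p : ℕ} (hp : 1 < p) (L N : ℕ) (hN : N < p ^ L) :
    ∑ i ∈ Finset.range L, (N / p ^ i % p) * p ^ i = N := by
  induction L generalizing N with
  | zero => simp at hN; simp [hN]
  | succ L ih =>
    have hdiv : N / p < p ^ L := by
      rw [Nat.div_lt_iff_lt_mul (by omega)]
      calc N < p ^ (L + 1) := hN
        _ = p ^ L * p := by ring
    rw [Finset.sum_range_succ' (fun i => N / p ^ i % p * p ^ i)]
    have : ∀ i, N / p ^ (i + 1) % p * p ^ (i + 1) = p * ((N / p) / p ^ i % p * p ^ i) := by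
      intro i
      rw [pow_succ, mul_comm (p ^ i) p, ← Nat.div_div_eq_div_mul]
      ring
    rw [Finset.sum_congr rfl (fun i _ => this i), ← Finset.mul_sum, ih _ hdiv]
    simp [Nat.div_add_mod]

open Polynomial

theorem digitSum_mul_eq_iff_carryFree (p : ℕ) (hp : p.Prime) (N M : ℕ) :
    digitSum p N * digitSum p M = digitSum p (N * M) ↔
      ∀ k : ℕ, (∑ i ∈ Finset.range (k + 1),
        (N / p ^ i % p) * (M / p ^ (k - i) % p)) ≤ p - 1 := by
  have hp1 : 1 < p := hp.one_lt
  set a : ℕ → ℕ := fun i => N / p ^ i % p with ha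
  set b : ℕ → ℕ := fun j => M / p ^ j % p with hb
  set c : ℕ → ℕ := fun k => ∑ i ∈ Finset.range (k + 1), a i * b (k - i) with hc
  set L : ℕ := N + M + 1 with hL
  have hNL : N < p ^ L := lt_of_le_of_lt (by omega)
    (Nat.lt_pow_self hp1 : L < p ^ L)
  have hML : M < p ^ L := lt_of_le_of_lt (by omega)
    (Nat.lt_pow_self hp1 : L < p ^ L)
  have haz : ∀ i, L ≤ i → a i = 0 := by
    intro i hi
    have : N < p ^ i := lt_of_lt_of_le hNL (Nat.pow_le_pow_right (by omega) hi)
    simp [ha, Nat.div_eq_of_lt this]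
  have hbz : ∀ j, L ≤ j → b j = 0 := by
    intro j hj
    have : M < p ^ j := lt_of_lt_of_le hML (Nat.pow_le_pow_right (by omega) hj)
    simp [hb, Nat.div_eq_of_lt this]
  set A : ℕ[X] := ∑ i ∈ Finset.range L, C (a i) * X ^ i with hA
  set B : ℕ[X] := ∑ j ∈ Finset.range L, C (b j) * X ^ j with hB
  have hcoeffA : ∀ i, A.coeff i = a i := by
    intro i
    rw [hA, Polynomial.finset_sum_coeff]
    simp only [coeff_C_mul, coeff_X_pow, mul_ite, mul_one, mul_zero]
    rw [Finset.sum_ite_eq (Finset.range L) i a]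
    split_ifs with h
    · rfl
    · exact (haz i (by simpa using h)).symm
  have hcoeffB : ∀ j, B.coeff j = b j := by
    intro j
    rw [hB, Polynomial.finset_sum_coeff]
    simp only [coeff_C_mul, coeff_X_pow, mul_ite, mul_one, mul_zero]
    rw [Finset.sum_ite_eq (Finset.range L) j b]
    split_ifs with h
    · rfl
    · exact (hbz j (by simpa using h)).symm
  have hcoeffAB : ∀ k, (A * B).coeff k = c k := by
    intro k
    rw [Polynomial.coeff_mul, Finset.Nat.sum_antidiagonal_eq_sum_range_succ_mk]
    exact Finset.sum_congr rfl fun i _ => by rw [hcoeffA, hcoeffB]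
  have hdegA : A.natDegree ≤ L := natDegree_sum_le_of_forall_le _ _ fun i hi =>
    le_trans (natDegree_C_mul_le _ _) (by
      simpa using le_of_lt (Finset.mem_range.mp hi))
  have hdegB : B.natDegree ≤ L := natDegree_sum_le_of_forall_le _ _ fun i hi =>
    le_trans (natDegree_C_mul_le _ _) (by
      simpa using le_of_lt (Finset.mem_range.mp hi))
  have hdeg : (A * B).natDegree < 2 * L + 1 :=
    lt_of_le_of_lt (natDegree_mul_le) (by omega)
  set K : ℕ := 2 * L + 1 with hK
  have hevalA : ∀ x : ℕ, A.eval x = ∑ i ∈ Finset.range L, a i * x ^ i := by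
    intro x
    rw [hA, Polynomial.eval_finset_sum]
    simp
  have hevalB : ∀ x : ℕ, B.eval x = ∑ j ∈ Finset.range L, b j * x ^ j := by
    intro x
    rw [hB, Polynomial.eval_finset_sum]
    simp
  have hNM : N * M = ∑ k ∈ Finset.range K, c k * p ^ k := by
    have h1 : (A * B).eval p = N * M := by
      rw [Polynomial.eval_mul, hevalA, hevalB,
        sum_digit_mul_pow hp1 L N hNL, sum_digit_mul_pow hp1 L M hML]
    have h2 : (A * B).eval p = ∑ k ∈ Finset.range K, c k * p ^ k := by
      rw [Polynomial.eval_eq_sum_range' hdeg]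
      exact Finset.sum_congr rfl fun k _ => by rw [hcoeffAB]
    rw [← h1, h2]
  have hT : digitSum p N * digitSum p M = ∑ k ∈ Finset.range K, c k := by
    have h1 : (A * B).eval 1 = digitSum p N * digitSum p M := by
      rw [Polynomial.eval_mul, hevalA, hevalB, dsum_range hp1 L N hNL, dsum_range hp1 L M hML]
      simp
      rfl
    have h2 : (A * B).eval 1 = ∑ k ∈ Finset.range K, c k := by
      rw [Polynomial.eval_eq_sum_range' hdeg]
      exact Finset.sum_congr rfl fun k _ => by rw [hcoeffAB]; simp
    rw [← h1, h2]
  constructor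
  · intro heq k
    by_contra hk
    have hck : p ≤ c k := by
      have hk' : ¬ c k ≤ p - 1 := hk
      omega
    have hkK : k < K := by
      have hpos : c k ≠ 0 := by omega
      obtain ⟨i, hi, hterm⟩ := Finset.exists_ne_zero_of_sum_ne_zero hpos
      have hiL : i < L := by
        by_contra h
        simp [haz i (by omega)] at hterm
      have hkiL : k - i < L := by
        by_contra h
        simp [hbz (k - i) (by omega)] at hterm
      simp only [Finset.mem_range] at hi
      omega
    have hlt : digitSum p (N * M) < digitSum p N * digitSum p M := by
      rw [hNM, hT]
      calc digitSum p (∑ k ∈ Finset.range K, c k * p ^ k)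
          ≤ ∑ k ∈ Finset.range K, digitSum p (c k) := dsum_sum_le hp1 K c
        _ < ∑ k ∈ Finset.range K, c k := by
            apply Finset.sum_lt_sum (fun i _ => Nat.digit_sum_le p (c i))
            exact ⟨k, Finset.mem_range.mpr hkK, dsum_lt hp1 hck⟩
    omega
  · intro h
    have hclt : ∀ k, c k < p := fun k => by have : c k ≤ p - 1 := h k; omega
    rw [hNM, dsum_sum_eq hp1 K c hclt, hT]
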